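/- arXiv:2207.01361 — 5 statements merged into one kernel-verified Lean document; each statement's English description precedes it below -/
import Mathlib

section
/- Let A be an n×n real symmetric positive definite matrix and let B be an m×n real matrix of rank r. Then the (n+m)×(n+m) real symmetric matrix M = [[A, Bᵀ], [B, 0]] has exactly n positive eigenvalues, exactly r negative eigenvalues, and exactly m − r zero eigenvalues, counted with multiplicity. -/
open Matrix Finset
set_option linter.unusedSectionVars false
set_option maxHeartbeats 800000

variable {ι : Type*} [Fintype ι] [DecidableEq ι]

/-- The submodule of vectors supported on a finset `P`. -/
def suppSub (P : Finset ι) : Submodule ℝ (ι → ℝ) where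
  carrier := {c | ∀ j ∉ P, c j = 0}
  add_mem' := by intro a b ha hb j hj; simp [ha j hj, hb j hj]
  zero_mem' := by intro j hj; rfl
  smul_mem' := by intro r a ha j hj; simp [ha j hj]

lemma mem_suppSub {P : Finset ι} {c : ι → ℝ} : c ∈ suppSub P ↔ ∀ j ∉ P, c j = 0 := Iff.rfl

noncomputable def suppSubEquiv (P : Finset ι) : suppSub P ≃ₗ[ℝ] (↥P → ℝ) where
  toFun c j := (c : ι → ℝ) j
  map_add' a b := rfl
  map_smul' r a := rfl
  invFun y := ⟨fun j => if h : j ∈ P then y ⟨j, h⟩ else 0, fun j hj => dif_neg hj⟩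
  left_inv c := by
    ext j
    by_cases h : j ∈ P
    · simp [h]
    · simp [h, (c.2 : ∀ j ∉ P, (c : ι → ℝ) j = 0) j h]
  right_inv y := by ext j; simp [j.2]

lemma finrank_suppSub (P : Finset ι) : Module.finrank ℝ (suppSub P) = P.card := by
  rw [(suppSubEquiv P).finrank_eq]
  simp [Module.finrank_pi]

lemma congr_quad (C M : Matrix ι ι ℝ) (y : ι → ℝ) :
    (C *ᵥ y) ⬝ᵥ (M *ᵥ (C *ᵥ y)) = y ⬝ᵥ ((Cᵀ * M * C) *ᵥ y) := by
  rw [← mulVec_mulVec, ← vecMul_transpose, ← dotProduct_mulVec, mulVec_mulVec]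

lemma quad_diagonal (d : ι → ℝ) (x : ι → ℝ) :
    x ⬝ᵥ ((diagonal d) *ᵥ x) = ∑ j, d j * x j ^ 2 := by
  simp only [dotProduct, mulVec_diagonal]
  exact Finset.sum_congr rfl fun j _ => by ring

lemma star_trans (U : Matrix ι ι ℝ) : star U = Uᵀ := by
  ext i j; simp [conjTranspose_apply]

noncomputable def unitInv (M : Matrix ι ι ℝ) (hM : M.IsHermitian) :
    Invertible (hM.eigenvectorUnitary : Matrix ι ι ℝ) :=
  ⟨star (hM.eigenvectorUnitary : Matrix ι ι ℝ),
    mem_unitaryGroup_iff'.mp hM.eigenvectorUnitary.2,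
    mem_unitaryGroup_iff.mp hM.eigenvectorUnitary.2⟩

lemma exists_subspace (M : Matrix ι ι ℝ) (hM : M.IsHermitian) (P : Finset ι) :
    ∃ W : Submodule ℝ (ι → ℝ), Module.finrank ℝ W = P.card ∧
      ∀ x ∈ W, ∃ c : ι → ℝ, (∀ j ∉ P, c j = 0) ∧ (x ≠ 0 → c ≠ 0) ∧
        x ⬝ᵥ (M *ᵥ x) = ∑ j, hM.eigenvalues j * c j ^ 2 := by
  set U : Matrix ι ι ℝ := (hM.eigenvectorUnitary : Matrix ι ι ℝ) with hUdef
  have hdiag : Uᵀ * M * U = diagonal hM.eigenvalues := by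
    have := hM.conjStarAlgAut_star_eigenvectorUnitary
    rw [Unitary.conjStarAlgAut_star_apply] at this
    rwa [star_trans, RCLike.ofReal_real_eq_id, Function.id_comp] at this
  have hUinv : Invertible U := unitInv M hM
  let e := U.toLinearEquiv' hUinv
  have hec : ∀ c, (e : (ι → ℝ) →ₗ[ℝ] (ι → ℝ)) c = U *ᵥ c := by
    intro c
    rw [Matrix.toLinearEquiv'_apply]
    exact Matrix.toLin'_apply U c
  refine ⟨(suppSub P).map (e : (ι → ℝ) →ₗ[ℝ] (ι → ℝ)), ?_, ?_⟩
  · rw [LinearEquiv.finrank_map_eq, finrank_suppSub]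
  · rintro x ⟨c, hc, rfl⟩
    refine ⟨c, hc, ?_, ?_⟩
    · intro hx h0
      exact hx (by rw [h0, map_zero])
    · rw [hec, congr_quad, hdiag, quad_diagonal]

lemma dim_bound {M : Matrix ι ι ℝ} (W₁ W₂ : Submodule ℝ (ι → ℝ))
    (h₁ : ∀ x ∈ W₁, x ≠ 0 → 0 < x ⬝ᵥ (M *ᵥ x))
    (h₂ : ∀ x ∈ W₂, x ⬝ᵥ (M *ᵥ x) ≤ 0) :
    Module.finrank ℝ W₁ + Module.finrank ℝ W₂ ≤ Fintype.card ι := by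
  have hd : Disjoint W₁ W₂ := by
    rw [Submodule.disjoint_def]
    intro x hx1 hx2
    by_contra hx
    exact absurd (h₂ x hx2) (not_le.mpr (h₁ x hx1 hx))
  calc Module.finrank ℝ W₁ + Module.finrank ℝ W₂ ≤ Module.finrank ℝ (ι → ℝ) :=
        Submodule.finrank_add_finrank_le_of_disjoint hd
    _ = Fintype.card ι := Module.finrank_pi ℝ

lemma exists_posdef_subspace {M : Matrix ι ι ℝ} (hM : M.IsHermitian) :
    ∃ W : Submodule ℝ (ι → ℝ),
      Module.finrank ℝ W = (univ.filter fun i => 0 < hM.eigenvalues i).card ∧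
      ∀ x ∈ W, x ≠ 0 → 0 < x ⬝ᵥ (M *ᵥ x) := by
  obtain ⟨W, hc, hq⟩ := exists_subspace M hM (univ.filter fun i => 0 < hM.eigenvalues i)
  refine ⟨W, hc, fun x hx hx0 => ?_⟩
  obtain ⟨c, hsupp, hc0, hqx⟩ := hq x hx
  rw [hqx]
  obtain ⟨j, hj⟩ := Function.ne_iff.mp (hc0 hx0)
  have hjP : 0 < hM.eigenvalues j := by
    by_contra h
    exact hj (hsupp j (by simp [h]))
  refine Finset.sum_pos' (fun i _ => ?_) ⟨j, Finset.mem_univ j, ?_⟩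
  · by_cases hi : 0 < hM.eigenvalues i
    · positivity
    · rw [hsupp i (by simp [hi])]; simp
  · have : c j ≠ 0 := by simpa using hj
    positivity

lemma exists_nonpos_subspace {M : Matrix ι ι ℝ} (hM : M.IsHermitian) :
    ∃ W : Submodule ℝ (ι → ℝ),
      Module.finrank ℝ W + (univ.filter fun i => 0 < hM.eigenvalues i).card = Fintype.card ι ∧
      ∀ x ∈ W, x ⬝ᵥ (M *ᵥ x) ≤ 0 := by
  obtain ⟨W, hc, hq⟩ := exists_subspace M hM (univ.filter fun i => ¬ 0 < hM.eigenvalues i)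
  refine ⟨W, ?_, fun x hx => ?_⟩
  · rw [hc]
    have := Finset.card_filter_add_card_filter_not
      (s := (univ : Finset ι)) (p := fun i => 0 < hM.eigenvalues i)
    rw [Finset.card_univ] at this
    omega
  · obtain ⟨c, hsupp, -, hqx⟩ := hq x hx
    rw [hqx]
    apply Finset.sum_nonpos
    intro j _
    by_cases hj : 0 < hM.eigenvalues j
    · rw [hsupp j (by simp [hj])]; simp
    · have : hM.eigenvalues j ≤ 0 := le_of_not_gt hj
      have h2 : (0:ℝ) ≤ c j ^ 2 := sq_nonneg _
      exact mul_nonpos_of_nonpos_of_nonneg this h2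

lemma le_posCard {M : Matrix ι ι ℝ} (hM : M.IsHermitian) (W : Submodule ℝ (ι → ℝ))
    (hW : ∀ x ∈ W, x ≠ 0 → 0 < x ⬝ᵥ (M *ᵥ x)) :
    Module.finrank ℝ W ≤ (univ.filter fun i => 0 < hM.eigenvalues i).card := by
  obtain ⟨W₂, hW₂card, hW₂⟩ := exists_nonpos_subspace hM
  have := dim_bound W W₂ hW hW₂
  omega

lemma posCard_le_of_congr {M C : Matrix ι ι ℝ} (hM : M.IsHermitian) (hC : IsUnit C.det)
    (hM' : (Cᵀ * M * C).IsHermitian) :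
    (univ.filter fun i => 0 < hM'.eigenvalues i).card ≤
      (univ.filter fun i => 0 < hM.eigenvalues i).card := by
  obtain ⟨W, hWrank, hW⟩ := exists_posdef_subspace hM'
  have hinv : Invertible C := C.invertibleOfIsUnitDet hC
  let e := C.toLinearEquiv' hinv
  have hec : ∀ c, (e : (ι → ℝ) →ₗ[ℝ] (ι → ℝ)) c = C *ᵥ c := by
    intro c
    rw [Matrix.toLinearEquiv'_apply]
    exact Matrix.toLin'_apply C c
  have key := le_posCard hM (W.map (e : (ι → ℝ) →ₗ[ℝ] (ι → ℝ))) ?_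
  · rwa [LinearEquiv.finrank_map_eq, hWrank] at key
  · rintro x ⟨y, hy, rfl⟩ hx
    rw [hec, congr_quad]
    refine hW y hy fun h0 => hx ?_
    rw [h0, map_zero]

lemma posCard_congr {M C D : Matrix ι ι ℝ} (hM : M.IsHermitian) (hD : D.IsHermitian)
    (h : D = Cᵀ * M * C) (hC : IsUnit C.det) :
    (univ.filter fun i => 0 < hD.eigenvalues i).card
      = (univ.filter fun i => 0 < hM.eigenvalues i).card := by
  have hle : ∀ (M' C' D' : Matrix ι ι ℝ) (hM' : M'.IsHermitian) (hD' : D'.IsHermitian),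
      D' = C'ᵀ * M' * C' → IsUnit C'.det →
      (univ.filter fun i => 0 < hD'.eigenvalues i).card ≤
        (univ.filter fun i => 0 < hM'.eigenvalues i).card := by
    intro M' C' D' hM' hD' h' hC'
    subst h'
    exact posCard_le_of_congr hM' hC' hD'
  have hdet0 : C.det ≠ 0 := hC.ne_zero
  have hC' : IsUnit (C⁻¹).det := by
    rw [Matrix.det_nonsing_inv]
    exact isUnit_iff_ne_zero.mpr (by simpa using hdet0)
  have h1 : C * C⁻¹ = 1 := mul_nonsing_inv C hC
  have hMeq : M = (C⁻¹)ᵀ * D * C⁻¹ := by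
    rw [h]
    have h2 : (C⁻¹)ᵀ * Cᵀ = 1 := by rw [← transpose_mul, h1, transpose_one]
    calc M = ((C⁻¹)ᵀ * Cᵀ) * M * (C * C⁻¹) := by rw [h2, h1, Matrix.one_mul, Matrix.mul_one]
    _ = (C⁻¹)ᵀ * (Cᵀ * M * C) * C⁻¹ := by simp only [Matrix.mul_assoc]
  exact le_antisymm (hle M C D hM hD h hC) (hle D C⁻¹ M hD hM hMeq hC')

lemma rank_eq_pos_add_neg {M : Matrix ι ι ℝ} (hM : M.IsHermitian) :
    M.rank = (univ.filter fun i => 0 < hM.eigenvalues i).card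
      + (univ.filter fun i => hM.eigenvalues i < 0).card := by
  rw [hM.rank_eq_card_non_zero_eigs, Fintype.card_subtype]
  rw [← Finset.card_union_of_disjoint (by
    rw [Finset.disjoint_left]
    intro a ha hb
    simp only [Finset.mem_filter] at ha hb
    linarith [ha.2, hb.2])]
  rw [← Finset.filter_or]
  congr 1
  apply Finset.filter_congr
  intro i _
  constructor
  · intro h
    rcases h.lt_or_gt with h' | h'
    · exact Or.inr h'
    · exact Or.inl h'
  · rintro (h | h)
    · exact h.ne'
    · exact h.ne

lemma zero_count {M : Matrix ι ι ℝ} (hM : M.IsHermitian) :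
    (univ.filter fun i => hM.eigenvalues i = 0).card + M.rank = Fintype.card ι := by
  rw [hM.rank_eq_card_non_zero_eigs, Fintype.card_subtype]
  have := Finset.card_filter_add_card_filter_not
    (s := (univ : Finset ι)) (p := fun i => hM.eigenvalues i = 0)
  rw [Finset.card_univ] at this
  simpa using this

lemma posCard_diagonal (d : ι → ℝ) (h : (diagonal d).IsHermitian) :
    (univ.filter fun i => 0 < h.eigenvalues i).card = (univ.filter fun i => 0 < d i).card := by
  apply le_antisymm
  · obtain ⟨W, hWrank, hW⟩ := exists_posdef_subspace h
    have h2 : ∀ x ∈ suppSub (univ.filter fun i => ¬ 0 < d i),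
        x ⬝ᵥ ((diagonal d) *ᵥ x) ≤ 0 := by
      intro x hx
      rw [quad_diagonal]
      apply Finset.sum_nonpos
      intro j _
      by_cases hj : 0 < d j
      · rw [(mem_suppSub.mp hx) j (by simp [hj])]
        simp
      · exact mul_nonpos_of_nonpos_of_nonneg (le_of_not_gt hj) (sq_nonneg _)
    have hb := dim_bound W _ hW h2
    rw [hWrank, finrank_suppSub] at hb
    have hsplit := Finset.card_filter_add_card_filter_not
      (s := (univ : Finset ι)) (p := fun i => 0 < d i)
    rw [Finset.card_univ] at hsplit
    omega
  · refine le_trans (le_of_eq (finrank_suppSub _).symm)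
      (le_posCard h (suppSub (univ.filter fun i => 0 < d i)) ?_)
    intro x hx hx0
    rw [quad_diagonal]
    obtain ⟨j, hj⟩ := Function.ne_iff.mp hx0
    have hjP : 0 < d j := by
      by_contra hc
      exact hj ((mem_suppSub.mp hx) j (by simp [hc]))
    refine Finset.sum_pos' (fun i _ => ?_)
      ⟨j, Finset.mem_univ j, mul_pos hjP ((sq_nonneg (x j)).lt_of_ne ((pow_ne_zero 2 hj).symm))⟩
    by_cases hi : 0 < d i
    · positivity
    · rw [(mem_suppSub.mp hx) i (by simp [hi])]
      simp

lemma real_conjT {k l : Type*} (N : Matrix k l ℝ) : Nᴴ = Nᵀ := by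
  ext i j; simp [conjTranspose_apply]

lemma trans_mul_mul_eq_diagonal {M : Matrix ι ι ℝ} (hM : M.IsHermitian) :
    (hM.eigenvectorUnitary : Matrix ι ι ℝ)ᵀ * M * (hM.eigenvectorUnitary : Matrix ι ι ℝ)
      = diagonal hM.eigenvalues := by
  have := hM.conjStarAlgAut_star_eigenvectorUnitary
  rw [Unitary.conjStarAlgAut_star_apply] at this
  rwa [star_trans, RCLike.ofReal_real_eq_id, Function.id_comp] at this

lemma unitary_det_isUnit {M : Matrix ι ι ℝ} (hM : M.IsHermitian) :
    IsUnit (hM.eigenvectorUnitary : Matrix ι ι ℝ).det := by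
  have : Invertible (hM.eigenvectorUnitary : Matrix ι ι ℝ) := unitInv M hM
  exact (isUnit_iff_isUnit_det _).mp (isUnit_of_invertible _)

open scoped MatrixOrder in
lemma exists_symm_sqrt {n : Type*} [Fintype n] [DecidableEq n] {P : Matrix n n ℝ}
    (hP : P.PosSemidef) : ∃ H : Matrix n n ℝ, H * H = P ∧ H.IsHermitian :=
  ⟨CFC.sqrt P, CFC.sqrt_mul_sqrt_self P hP.nonneg, (CFC.sqrt_nonneg P).posSemidef.1⟩

/-- Inertia of the saddle-point matrix `M = [[A, Bᵀ], [B, 0]]` with `A` symmetric positive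
definite (n×n) and `B` of rank `r` (m×n): `M` has exactly `n` positive eigenvalues,
exactly `r` negative eigenvalues and exactly `m - r` zero eigenvalues, counted with
multiplicity. -/
theorem saddle_point_inertia
    (n m r : ℕ)
    (A : Matrix (Fin n) (Fin n) ℝ) (hA : A.PosDef)
    (B : Matrix (Fin m) (Fin n) ℝ) (hB : B.rank = r)
    (hM : (Matrix.fromBlocks A Bᵀ B (0 : Matrix (Fin m) (Fin m) ℝ)).IsHermitian) :
    (Finset.univ.filter fun i => 0 < hM.eigenvalues i).card = n ∧
    (Finset.univ.filter fun i => hM.eigenvalues i < 0).card = r ∧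
    (Finset.univ.filter fun i => hM.eigenvalues i = 0).card = m - r := by
  have hAdet : IsUnit A.det := hA.det_pos.ne'.isUnit
  have hAH : A.IsHermitian := hA.1
  have hAt : Aᵀ = A := by rw [← real_conjT]; exact hAH
  set S : Matrix (Fin m) (Fin m) ℝ := B * A⁻¹ * Bᵀ with hSdef
  have hAinv : (A⁻¹).PosDef := hA.inv
  have hS : S.PosSemidef := by
    have h := hAinv.posSemidef.conjTranspose_mul_mul_same Bᵀ
    rwa [real_conjT, transpose_transpose] at h
  -- rank of S
  have hrankS : S.rank = r := by
    obtain ⟨H, hHH, hHH'⟩ := exists_symm_sqrt hAinv.posSemidef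
    have hHt : Hᵀ = H := by rw [← real_conjT]; exact hHH'
    have hHdet : IsUnit H.det := by
      have hmul : H.det * H.det = (A⁻¹).det := by rw [← det_mul, hHH]
      have hAinvdet : (A⁻¹).det ≠ 0 := hAinv.det_pos.ne'
      refine isUnit_iff_ne_zero.mpr fun h0 => hAinvdet ?_
      rw [← hmul, h0, mul_zero]
    have h1 : S = (B * H) * (B * H)ᵀ := by
      rw [transpose_mul, hHt, hSdef, ← hHH]
      simp only [Matrix.mul_assoc]
    rw [h1, rank_self_mul_transpose, rank_mul_eq_left_of_isUnit_det H B hHdet, hB]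
  -- congruence to a diagonal matrix
  set X : Matrix (Fin n) (Fin m) ℝ := A⁻¹ * Bᵀ with hXdef
  have hAX : A * X = Bᵀ := by
    rw [hXdef, ← Matrix.mul_assoc, mul_nonsing_inv A hAdet, Matrix.one_mul]
  have hXt : Xᵀ = B * A⁻¹ := by
    rw [hXdef, transpose_mul, transpose_nonsing_inv, hAt, transpose_transpose]
  have hXtA : Xᵀ * A = B := by
    rw [hXt, Matrix.mul_assoc, nonsing_inv_mul A hAdet, Matrix.mul_one]
  have hXtB : Xᵀ * Bᵀ = S := by rw [hXt, hSdef, Matrix.mul_assoc]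
  set M := fromBlocks A Bᵀ B (0 : Matrix (Fin m) (Fin m) ℝ) with hMdef
  set L : Matrix (Fin n ⊕ Fin m) (Fin n ⊕ Fin m) ℝ := fromBlocks 1 (-X) 0 1 with hLdef
  have step1 : Lᵀ * M * L = fromBlocks A 0 0 (-S) := by
    rw [hLdef, hMdef, fromBlocks_transpose, fromBlocks_multiply, fromBlocks_multiply]
    simp [hAX, hXtA, hXtB, Matrix.mul_neg, Matrix.neg_mul]
  set UA : Matrix (Fin n) (Fin n) ℝ := (hAH.eigenvectorUnitary : Matrix (Fin n) (Fin n) ℝ)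
    with hUAdef
  set US : Matrix (Fin m) (Fin m) ℝ := (hS.1.eigenvectorUnitary : Matrix (Fin m) (Fin m) ℝ)
    with hUSdef
  set G : Matrix (Fin n ⊕ Fin m) (Fin n ⊕ Fin m) ℝ := fromBlocks UA 0 0 US with hGdef
  set d : Fin n ⊕ Fin m → ℝ := Sum.elim hAH.eigenvalues (-(hS.1.eigenvalues)) with hddef
  have hdS : USᵀ * (-S) * US = -(diagonal hS.1.eigenvalues) := by
    rw [show USᵀ * (-S) * US = -(USᵀ * S * US) by
      simp [Matrix.mul_neg, Matrix.neg_mul], hUSdef, trans_mul_mul_eq_diagonal hS.1]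
  have step2 : (L * G)ᵀ * M * (L * G) = diagonal d := by
    rw [transpose_mul]
    have assoc : Gᵀ * Lᵀ * M * (L * G) = Gᵀ * (Lᵀ * M * L) * G := by
      simp only [Matrix.mul_assoc]
    rw [assoc, step1, hGdef, fromBlocks_transpose, fromBlocks_multiply, fromBlocks_multiply,
      hddef, ← fromBlocks_diagonal]
    simp only [Matrix.transpose_zero, Matrix.zero_mul, Matrix.mul_zero, add_zero, zero_add,
      Matrix.mul_one, Matrix.one_mul]
    rw [hdS, hUAdef, trans_mul_mul_eq_diagonal hAH]
    rw [diagonal_neg]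
    rfl
  have hdetL : IsUnit L.det := by
    rw [hLdef, det_fromBlocks_zero₂₁]
    simp
  have hdetG : IsUnit G.det := by
    rw [hGdef, det_fromBlocks_zero₂₁]
    exact (unitary_det_isUnit hAH).mul (unitary_det_isUnit hS.1)
  have hdetC : IsUnit (L * G).det := by
    rw [det_mul]
    exact hdetL.mul hdetG
  have hd : (diagonal d).IsHermitian := isHermitian_diagonal d
  have hpos := posCard_congr hM hd step2.symm hdetC
  rw [posCard_diagonal d hd] at hpos
  have hps : ∀ (p : (Fin n ⊕ Fin m) → Prop) [DecidablePred p],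
      (Finset.univ.filter p).card
        = Fintype.card {a : Fin n // p (Sum.inl a)} + Fintype.card {b : Fin m // p (Sum.inr b)} := by
    intro p hp
    rw [← Fintype.card_subtype, Fintype.card_congr (Equiv.subtypeSum), Fintype.card_sum]
  have hcount1 : (Finset.univ.filter fun i => 0 < d i).card = n := by
    rw [hps]
    have h1 : Fintype.card {a : Fin n // 0 < d (Sum.inl a)} = n := by
      simp only [hddef, Sum.elim_inl]
      rw [Fintype.card_subtype,
        Finset.filter_true_of_mem (fun a _ => hA.eigenvalues_pos a)]
      simp
    have h2 : Fintype.card {b : Fin m // 0 < d (Sum.inr b)} = 0 := by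
      simp only [hddef, Sum.elim_inr, Pi.neg_apply]
      rw [Fintype.card_eq_zero_iff]
      exact ⟨fun b => absurd b.2 (not_lt.mpr (neg_nonpos.mpr (hS.eigenvalues_nonneg b.1)))⟩
    omega
  have hrankM : M.rank = n + r := by
    have h1 : ((L * G)ᵀ * M * (L * G)).rank = M.rank := by
      rw [rank_mul_eq_left_of_isUnit_det _ _ hdetC,
        rank_mul_eq_right_of_isUnit_det _ _ (by rwa [det_transpose])]
    rw [step2, rank_diagonal] at h1
    rw [← h1, Fintype.card_subtype, hps]
    have h2 : Fintype.card {a : Fin n // d (Sum.inl a) ≠ 0} = n := by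
      simp only [hddef, Sum.elim_inl]
      rw [Fintype.card_subtype,
        Finset.filter_true_of_mem (fun a _ => (hA.eigenvalues_pos a).ne')]
      simp
    have h3 : Fintype.card {b : Fin m // d (Sum.inr b) ≠ 0} = r := by
      simp only [hddef, Sum.elim_inr, Pi.neg_apply, neg_ne_zero]
      rw [← hS.1.rank_eq_card_non_zero_eigs, hrankS]
    omega
  have epos : (Finset.univ.filter fun i => 0 < hM.eigenvalues i).card = n := by
    rw [← hpos, hcount1]
  have e2 := rank_eq_pos_add_neg hM
  have e3 := zero_count hM
  have hcard : Fintype.card (Fin n ⊕ Fin m) = n + m := by simp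
  rw [hcard] at e3
  refine ⟨epos, ?_, ?_⟩ <;> omega
end

section
/- Let n_I, n_Γ, m be positive natural numbers. Let A_II (n_I×n_I), A_ΓI (n_Γ×n_I), A_ΓΓ (n_Γ×n_Γ) be real matrices such that the full velocity matrix A = [[A_II, A_ΓIᵀ], [A_ΓI, A_ΓΓ]] is symmetric positive definite, and let B_II (m×n_I) be a real matrix whose rows are linearly independent (rank B_II = m), and B_IΓ (m×n_Γ) a real matrix. Let K = [[A_II, B_IIᵀ], [B_II, 0]] be the interior saddle-point matrix, which is invertible under these hypotheses. Then the Schur complement S_Γ = A_ΓΓ − [A_ΓI, B_IΓᵀ] K⁻¹ [A_ΓIᵀ; B_IΓ] (i.e., A_ΓΓ minus the product of the block row [A_ΓI B_IΓᵀ], the inverse of K, and the block column stacking A_ΓIᵀ over B_IΓ) is an n_Γ×n_Γ real symmetric positive definite matrix. -/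
open Matrix

/-- Lemma 1: the subdomain Stokes Schur complement is symmetric positive definite.
Here `A = [[A_II, A_ΓIᵀ], [A_ΓI, A_ΓΓ]]` is the (symmetric positive definite) subdomain
velocity matrix, `B_II` (full row rank) and `B_IΓ` are the divergence blocks, and
`K = [[A_II, B_IIᵀ], [B_II, 0]]` is the (invertible) interior saddle-point matrix.
The Schur complement obtained by eliminating the interior velocity and pressure unknowns,
`S_Γ = A_ΓΓ − [A_ΓI, B_IΓᵀ] K⁻¹ [A_ΓIᵀ; B_IΓ]`, is symmetric positive definite. -/
theorem stokes_schur_complement_posDef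
    (nI nΓ m : ℕ) (hnI : 0 < nI) (hnΓ : 0 < nΓ) (hm : 0 < m)
    (AII : Matrix (Fin nI) (Fin nI) ℝ)
    (AΓI : Matrix (Fin nΓ) (Fin nI) ℝ)
    (AΓΓ : Matrix (Fin nΓ) (Fin nΓ) ℝ)
    (hA : (Matrix.fromBlocks AII AΓIᵀ AΓI AΓΓ).PosDef)
    (BII : Matrix (Fin m) (Fin nI) ℝ) (hBII : BII.rank = m)
    (BIΓ : Matrix (Fin m) (Fin nΓ) ℝ) :
    (AΓΓ -
      Matrix.fromCols AΓI BIΓᵀ *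
        (Matrix.fromBlocks AII BIIᵀ BII (0 : Matrix (Fin m) (Fin m) ℝ))⁻¹ *
        Matrix.fromRows AΓIᵀ BIΓ).PosDef := by
  classical
  set A : Matrix (Fin nI ⊕ Fin nΓ) (Fin nI ⊕ Fin nΓ) ℝ :=
    Matrix.fromBlocks AII AΓIᵀ AΓI AΓΓ with hAdef
  set K : Matrix (Fin nI ⊕ Fin m) (Fin nI ⊕ Fin m) ℝ :=
    Matrix.fromBlocks AII BIIᵀ BII (0 : Matrix (Fin m) (Fin m) ℝ) with hKdef
  -- symmetry of the diagonal blocks of A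
  have hAII_symm : AIIᵀ = AII := by
    ext i j
    have := congrFun (congrFun hA.1 (Sum.inl i)) (Sum.inl j)
    simpa [hAdef, Matrix.conjTranspose_apply] using this
  have hAΓΓ_symm : AΓΓᵀ = AΓΓ := by
    ext i j
    have := congrFun (congrFun hA.1 (Sum.inr i)) (Sum.inr j)
    simpa [hAdef, Matrix.conjTranspose_apply] using this
  -- AII is positive definite
  have hAII : AII.PosDef := by
    refine Matrix.PosDef.of_dotProduct_mulVec_pos ?_ ?_
    · rw [Matrix.IsHermitian, Matrix.conjTranspose_eq_transpose_of_trivial, hAII_symm]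
    · intro x hx
      have hz : (Sum.elim x (0 : Fin nΓ → ℝ)) ≠ 0 := by
        intro h
        exact hx (funext fun i => congrFun h (Sum.inl i))
      have := hA.dotProduct_mulVec_pos hz
      simpa [hAdef, Matrix.fromBlocks_mulVec, sumElim_dotProduct_sumElim,
        Matrix.mulVec_zero, Function.star_sumElim] using this
  -- injectivity of BIIᵀ (full row rank of BII)
  have hBIIinj : ∀ p : Fin m → ℝ, BIIᵀ *ᵥ p = 0 → p = 0 := by
    intro p hp
    have hrankT : BIIᵀ.rank = m := by rw [Matrix.rank_transpose, hBII]
    have h1 := LinearMap.finrank_range_add_finrank_ker (BIIᵀ.mulVecLin)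
    rw [Module.finrank_pi, Fintype.card_fin] at h1
    have hrange : Module.finrank ℝ (LinearMap.range BIIᵀ.mulVecLin) = m := hrankT
    have hker0 : Module.finrank ℝ (LinearMap.ker BIIᵀ.mulVecLin) = 0 := by omega
    have hker : LinearMap.ker BIIᵀ.mulVecLin = ⊥ :=
      Submodule.finrank_eq_zero.mp hker0
    have hpmem : p ∈ LinearMap.ker BIIᵀ.mulVecLin := by
      rw [LinearMap.mem_ker, Matrix.mulVecLin_apply]; exact hp
    rw [hker] at hpmem
    simpa using hpmem
  -- K is injective, hence has unit determinant
  have hKinj : ∀ v : Fin nI ⊕ Fin m → ℝ, K *ᵥ v = 0 → v = 0 := by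
    intro v hv
    set v1 : Fin nI → ℝ := v ∘ Sum.inl with hv1def
    set v2 : Fin m → ℝ := v ∘ Sum.inr with hv2def
    have hv' : K *ᵥ (Sum.elim v1 v2) = 0 := by
      rw [hv1def, hv2def, Sum.elim_comp_inl_inr]; exact hv
    rw [hKdef, Matrix.fromBlocks_mulVec] at hv'
    have e1 : AII *ᵥ v1 + BIIᵀ *ᵥ v2 = 0 := by
      ext i; exact congrFun hv' (Sum.inl i)
    have e2 : BII *ᵥ v1 = 0 := by
      ext i
      have := congrFun hv' (Sum.inr i)
      simpa [Matrix.zero_mulVec] using this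
    have hv1 : v1 = 0 := by
      by_contra h
      have hpos := hAII.dotProduct_mulVec_pos h
      have hq1 : v1 ⬝ᵥ (AII *ᵥ v1) + v1 ⬝ᵥ (BIIᵀ *ᵥ v2) = 0 := by
        have := congrArg (fun w => v1 ⬝ᵥ w) e1
        simpa [dotProduct_add] using this
      have hq2 : v1 ⬝ᵥ (BIIᵀ *ᵥ v2) = (BII *ᵥ v1) ⬝ᵥ v2 := by
        rw [Matrix.dotProduct_mulVec, Matrix.vecMul_transpose]
      rw [hq2, e2, zero_dotProduct, add_zero] at hq1
      simp only [star_trivial] at hpos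
      rw [hq1] at hpos
      exact lt_irrefl 0 hpos
    have hbv2 : BIIᵀ *ᵥ v2 = 0 := by
      rw [hv1, Matrix.mulVec_zero, zero_add] at e1
      exact e1
    have hv2 : v2 = 0 := hBIIinj v2 hbv2
    have : Sum.elim v1 v2 = 0 := by rw [hv1, hv2]; ext i; cases i <;> simp
    rw [hv1def, hv2def, Sum.elim_comp_inl_inr] at this
    exact this
  have hKdet : IsUnit K.det := by
    rw [isUnit_iff_ne_zero]
    intro hdet
    obtain ⟨v, hvne, hv0⟩ := Matrix.exists_mulVec_eq_zero_iff.mpr hdet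
    exact hvne (hKinj v hv0)
  -- K and K⁻¹ are symmetric
  have hKsym : Kᵀ = K := by
    rw [hKdef, Matrix.fromBlocks_transpose, Matrix.transpose_transpose, hAII_symm,
      Matrix.transpose_zero]
  have hKinvsym : (K⁻¹)ᵀ = K⁻¹ := by
    rw [Matrix.transpose_nonsing_inv, hKsym]
  -- the Schur complement
  set C : Matrix (Fin nΓ) (Fin nI ⊕ Fin m) ℝ := Matrix.fromCols AΓI BIΓᵀ with hCdef
  set R : Matrix (Fin nI ⊕ Fin m) (Fin nΓ) ℝ := Matrix.fromRows AΓIᵀ BIΓ with hRdef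
  have hCT : Cᵀ = R := by
    rw [hCdef, hRdef, Matrix.transpose_fromCols, Matrix.transpose_transpose]
  have hRT : Rᵀ = C := by
    rw [← hCT, Matrix.transpose_transpose]
  have hSsym : (AΓΓ - C * K⁻¹ * R)ᵀ = AΓΓ - C * K⁻¹ * R := by
    rw [Matrix.transpose_sub, hAΓΓ_symm, Matrix.transpose_mul, Matrix.transpose_mul,
      hRT, hKinvsym, hCT, Matrix.mul_assoc]
  refine Matrix.PosDef.of_dotProduct_mulVec_pos ?_ ?_
  · rw [Matrix.IsHermitian, Matrix.conjTranspose_eq_transpose_of_trivial, hSsym]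
  · intro x hx
    set y : Fin nI ⊕ Fin m → ℝ := K⁻¹ *ᵥ (R *ᵥ x) with hy
    set u : Fin nI → ℝ := y ∘ Sum.inl with hudef
    set q : Fin m → ℝ := y ∘ Sum.inr with hqdef
    have hKy : K *ᵥ y = R *ᵥ x := by
      rw [hy, Matrix.mulVec_mulVec, Matrix.mul_nonsing_inv K hKdet, Matrix.one_mulVec]
    have hKy' : K *ᵥ (Sum.elim u q) = Sum.elim (AΓIᵀ *ᵥ x) (BIΓ *ᵥ x) := by
      rw [hudef, hqdef, Sum.elim_comp_inl_inr, hKy, hRdef, Matrix.fromRows_mulVec]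
    rw [hKdef, Matrix.fromBlocks_mulVec] at hKy'
    have e1 : AII *ᵥ u + BIIᵀ *ᵥ q = AΓIᵀ *ᵥ x := by
      ext i; exact congrFun hKy' (Sum.inl i)
    have e2 : BII *ᵥ u = BIΓ *ᵥ x := by
      ext i
      have := congrFun hKy' (Sum.inr i)
      simpa [Matrix.zero_mulVec] using this
    -- the test vector for A
    have hz : (Sum.elim (-u) x) ≠ 0 := by
      intro h
      exact hx (funext fun i => congrFun h (Sum.inr i))
    have hpos := hA.dotProduct_mulVec_pos hz
    simp only [star_trivial] at hpos ⊢
    -- scalar identities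
    have swap1 : u ⬝ᵥ (BIIᵀ *ᵥ q) = (BIΓ *ᵥ x) ⬝ᵥ q := by
      rw [Matrix.dotProduct_mulVec, Matrix.vecMul_transpose, e2]
    have swap2 : u ⬝ᵥ (AΓIᵀ *ᵥ x) = x ⬝ᵥ (AΓI *ᵥ u) := by
      rw [Matrix.dotProduct_mulVec, Matrix.vecMul_transpose, dotProduct_comm]
    have swap3 : x ⬝ᵥ (BIΓᵀ *ᵥ q) = (BIΓ *ᵥ x) ⬝ᵥ q := by
      rw [Matrix.dotProduct_mulVec, Matrix.vecMul_transpose]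
    have hfact : u ⬝ᵥ (AII *ᵥ u) + (BIΓ *ᵥ x) ⬝ᵥ q = x ⬝ᵥ (AΓI *ᵥ u) := by
      have := congrArg (fun w => u ⬝ᵥ w) e1
      simpa [dotProduct_add, swap1, swap2] using this
    -- compute the quadratic form of A at the test vector
    have hAq : (Sum.elim (-u) x) ⬝ᵥ (A *ᵥ (Sum.elim (-u) x)) =
        u ⬝ᵥ (AII *ᵥ u) - u ⬝ᵥ (AΓIᵀ *ᵥ x) - x ⬝ᵥ (AΓI *ᵥ u) + x ⬝ᵥ (AΓΓ *ᵥ x) := by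
      rw [hAdef, Matrix.fromBlocks_mulVec, sumElim_dotProduct_sumElim]
      simp only [Sum.elim_comp_inl, Sum.elim_comp_inr, Matrix.mulVec_neg,
        dotProduct_add, dotProduct_neg, neg_dotProduct, neg_neg]
      ring
    -- compute the Schur quadratic form
    have hSq : x ⬝ᵥ ((AΓΓ - C * K⁻¹ * R) *ᵥ x) =
        x ⬝ᵥ (AΓΓ *ᵥ x) - x ⬝ᵥ (AΓI *ᵥ u) - x ⬝ᵥ (BIΓᵀ *ᵥ q) := by
      have hCy : (C * K⁻¹ * R) *ᵥ x = AΓI *ᵥ u + BIΓᵀ *ᵥ q := by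
        have : (C * K⁻¹ * R) *ᵥ x = C *ᵥ y := by
          rw [hy, Matrix.mulVec_mulVec, Matrix.mulVec_mulVec, Matrix.mul_assoc]
        rw [this]
        have hy' : C *ᵥ y = C *ᵥ (Sum.elim u q) := by
          rw [hudef, hqdef, Sum.elim_comp_inl_inr]
        rw [hy', hCdef, Matrix.fromCols_mulVec_sumElim]
      rw [Matrix.sub_mulVec, dotProduct_sub, hCy, dotProduct_add]
      ring
    rw [hSq]
    rw [hAq] at hpos
    rw [swap2] at hpos
    rw [swap3]
    linarith
end

section
/- Let S̃ be an m×m real symmetric positive definite matrix, and let R̃ and R̃_D be m×n real matrices satisfying R̃_Dᵀ R̃ = Iₙ. Define Ŝ = R̃ᵀ S̃ R̃ and M⁻¹ = R̃_Dᵀ S̃⁻¹ R̃_D. Then for every u ∈ ℝⁿ, uᵀ Ŝ u ≤ uᵀ Ŝ M⁻¹ Ŝ u; i.e., the Ŝ-inner product satisfies ⟨u, u⟩_Ŝ ≤ ⟨u, M⁻¹ Ŝ u⟩_Ŝ, so every eigenvalue of the BDDC preconditioned operator M⁻¹ Ŝ is bounded below by 1. -/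
open Matrix Finset

private lemma dp_helper {m k l : ℕ} (A : Matrix (Fin m) (Fin k) ℝ)
    (B : Matrix (Fin m) (Fin l) ℝ) (a : Fin k → ℝ) (b : Fin l → ℝ) :
    (A.mulVec a) ⬝ᵥ (B.mulVec b) = a ⬝ᵥ (Aᵀ * B).mulVec b := by
  rw [← vecMul_transpose, dotProduct_mulVec, vecMul_vecMul, ← dotProduct_mulVec]

open scoped MatrixOrder in
/-- Cauchy–Schwarz for a positive semidefinite bilinear form. -/
private lemma psd_cauchy_schwarz {m : ℕ} {St : Matrix (Fin m) (Fin m) ℝ} (h : St.PosSemidef)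
    (x y : Fin m → ℝ) :
    (x ⬝ᵥ St.mulVec y) ^ 2 ≤ (x ⬝ᵥ St.mulVec x) * (y ⬝ᵥ St.mulVec y) := by
  have hs := Matrix.nonneg_iff_posSemidef.mp (CFC.sqrt_nonneg St)
  have key : ∀ a b : Fin m → ℝ,
      a ⬝ᵥ St.mulVec b = ((CFC.sqrt St).mulVec a) ⬝ᵥ ((CFC.sqrt St).mulVec b) := by
    intro a b
    rw [dp_helper, ← conjTranspose_eq_transpose_of_trivial, hs.isHermitian.eq,
      CFC.sqrt_mul_sqrt_self St (Matrix.nonneg_iff_posSemidef.mpr h)]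
  rw [key x y, key x x, key y y]
  simpa [dotProduct, pow_two] using
    sum_mul_sq_le_sq_mul_sq Finset.univ ((CFC.sqrt St).mulVec x) ((CFC.sqrt St).mulVec y)

/-- Lower bound for the BDDC preconditioned operator: with `S̃` symmetric positive definite,
`R̃_Dᵀ R̃ = I`, `Ŝ = R̃ᵀ S̃ R̃` and `M⁻¹ = R̃_Dᵀ S̃⁻¹ R̃_D`, one has
`⟨u, u⟩_Ŝ ≤ ⟨u, M⁻¹ Ŝ u⟩_Ŝ` for all `u`, i.e. every eigenvalue of `M⁻¹ Ŝ` is at least 1. -/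
theorem bddc_eigenvalue_lower_bound
    (n m : ℕ)
    (St : Matrix (Fin m) (Fin m) ℝ) (hSt : St.PosDef)
    (Rt RtD : Matrix (Fin m) (Fin n) ℝ)
    (hR : RtDᵀ * Rt = (1 : Matrix (Fin n) (Fin n) ℝ))
    (u : Fin n → ℝ) :
    u ⬝ᵥ (Rtᵀ * St * Rt).mulVec u ≤
      u ⬝ᵥ ((Rtᵀ * St * Rt) * (RtDᵀ * St⁻¹ * RtD) * (Rtᵀ * St * Rt)).mulVec u := by
  have hSsym : Stᵀ = St := hSt.isHermitian.eq
  have hSinvsym : (St⁻¹)ᵀ = St⁻¹ := by rw [transpose_nonsing_inv, hSsym]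
  have hdet : IsUnit St.det := isUnit_iff_ne_zero.mpr hSt.det_pos.ne'
  set Sh : Matrix (Fin n) (Fin n) ℝ := Rtᵀ * St * Rt with hSh
  have hShsym : Shᵀ = Sh := by
    rw [hSh, Matrix.transpose_mul, Matrix.transpose_mul, transpose_transpose, hSsym,
      Matrix.mul_assoc]
  set y : Fin m → ℝ := Rt.mulVec u with hy
  set w : Fin m → ℝ := (RtD * Sh).mulVec u with hw
  set x : Fin m → ℝ := St⁻¹.mulVec w with hx
  have hStx : St.mulVec x = w := by
    rw [hx, mulVec_mulVec, mul_nonsing_inv St hdet, one_mulVec]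
  -- ⟨u, Ŝ u⟩ = ⟨w, y⟩
  have ha : u ⬝ᵥ Sh.mulVec u = w ⬝ᵥ y := by
    rw [hw, hy, dp_helper, Matrix.transpose_mul, Matrix.mul_assoc, hR, Matrix.mul_one,
      hShsym]
  -- ⟨x, St x⟩ equals the right-hand side
  have hb : x ⬝ᵥ St.mulVec x =
      u ⬝ᵥ (Sh * (RtDᵀ * St⁻¹ * RtD) * Sh).mulVec u := by
    have ht : (St⁻¹ * (RtD * Sh))ᵀ = Sh * RtDᵀ * St⁻¹ := by
      rw [Matrix.transpose_mul, hSinvsym, Matrix.transpose_mul, hShsym, Matrix.mul_assoc]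
    rw [hStx, hx, hw, mulVec_mulVec, dp_helper, ht]
    congr 1
    simp only [Matrix.mul_assoc]
  -- ⟨x, St y⟩ = ⟨w, y⟩
  have hxy : x ⬝ᵥ St.mulVec y = w ⬝ᵥ y := by
    rw [dotProduct_mulVec, ← hSsym, vecMul_transpose, hStx]
  have hcs := psd_cauchy_schwarz hSt.posSemidef x y
  rw [hxy] at hcs
  have hyy : y ⬝ᵥ St.mulVec y = u ⬝ᵥ Sh.mulVec u := by
    rw [hy, mulVec_mulVec, dp_helper, hSh, Matrix.mul_assoc]
  rw [hyy, ha] at hcs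
  have hb0 : 0 ≤ x ⬝ᵥ St.mulVec x := by
    have := hSt.posSemidef.dotProduct_mulVec_nonneg x
    rw [star_trivial] at this
    simpa using this
  have ha0 : 0 ≤ w ⬝ᵥ y := by
    rw [← ha, ← hyy]
    have := hSt.posSemidef.dotProduct_mulVec_nonneg y
    rw [star_trivial] at this
    simpa using this
  rw [ha, ← hb]
  rcases eq_or_lt_of_le ha0 with h0 | hpos
  · rw [← h0]; exact hb0
  · nlinarith [hcs]
end

section
/- Let S̃ be an m×m real symmetric positive definite matrix, let R̃ and R̃_D be m×n real matrices satisfying R̃_Dᵀ R̃ = Iₙ, and define Ŝ = R̃ᵀ S̃ R̃, M⁻¹ = R̃_Dᵀ S̃⁻¹ R̃_D, and the averaging operator E_D = R̃ R̃_Dᵀ. Assume there is a constant C > 0 such that (E_D v)ᵀ S̃ (E_D v) ≤ C² · vᵀ S̃ v for all v ∈ ℝᵐ. Then for every u ∈ ℝⁿ, uᵀ Ŝ M⁻¹ Ŝ u ≤ C² · uᵀ Ŝ u; i.e., ⟨u, M⁻¹ Ŝ u⟩_Ŝ ≤ C² ⟨u, u⟩_Ŝ, so every eigenvalue of the preconditioned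 operator M⁻¹ Ŝ is bounded above by C². -/
open Matrix

lemma symm_dot' (k : ℕ) (B : Matrix (Fin k) (Fin k) ℝ) (hB : Bᵀ = B)
    (x y : Fin k → ℝ) : x ⬝ᵥ B.mulVec y = y ⬝ᵥ B.mulVec x := by
  rw [dotProduct_mulVec, ← mulVec_transpose, hB, dotProduct_comm]

lemma cs_psd (k : ℕ) (B : Matrix (Fin k) (Fin k) ℝ) (hBT : Bᵀ = B)
    (hpos : ∀ x : Fin k → ℝ, 0 ≤ x ⬝ᵥ B.mulVec x)
    (x y : Fin k → ℝ) :
    (x ⬝ᵥ B.mulVec y) ^ 2 ≤ (x ⬝ᵥ B.mulVec x) * (y ⬝ᵥ B.mulVec y) := by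
  have key : ∀ t : ℝ, 0 ≤ (y ⬝ᵥ B.mulVec y) * (t * t) +
      (2 * (x ⬝ᵥ B.mulVec y)) * t + (x ⬝ᵥ B.mulVec x) := by
    intro t
    have h0 := hpos (x + t • y)
    have hsym := symm_dot' k B hBT y x
    simp only [mulVec_add, mulVec_smul, dotProduct_add, add_dotProduct,
      smul_dotProduct, dotProduct_smul, smul_eq_mul] at h0
    rw [hsym] at h0
    nlinarith [h0]
  have := discrim_le_zero key
  unfold discrim at this
  nlinarith [this]

lemma dot_conj (p q : ℕ) (A : Matrix (Fin p) (Fin q) ℝ)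
    (B : Matrix (Fin p) (Fin p) ℝ) (x y : Fin q → ℝ) :
    x ⬝ᵥ (Aᵀ * B * A).mulVec y = (A.mulVec x) ⬝ᵥ B.mulVec (A.mulVec y) := by
  rw [Matrix.mul_assoc, ← mulVec_mulVec, dotProduct_mulVec, vecMul_transpose,
    ← mulVec_mulVec]

/-- Upper bound for the BDDC preconditioned operator: with `S̃` symmetric positive definite,
`R̃_Dᵀ R̃ = I`, `Ŝ = R̃ᵀ S̃ R̃`, `M⁻¹ = R̃_Dᵀ S̃⁻¹ R̃_D` and `E_D = R̃ R̃_Dᵀ`, if the averaging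
operator satisfies the stability bound `|E_D v|_S̃² ≤ C² |v|_S̃²` for all `v`, then
`⟨u, M⁻¹ Ŝ u⟩_Ŝ ≤ C² ⟨u, u⟩_Ŝ` for all `u`, i.e. every eigenvalue of `M⁻¹ Ŝ` is at
most `C²`. -/
theorem bddc_eigenvalue_upper_bound
    (n m : ℕ)
    (St : Matrix (Fin m) (Fin m) ℝ) (hSt : St.PosDef)
    (Rt RtD : Matrix (Fin m) (Fin n) ℝ)
    (hR : RtDᵀ * Rt = (1 : Matrix (Fin n) (Fin n) ℝ))
    (C : ℝ) (hC : 0 < C)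
    (hED : ∀ v : Fin m → ℝ,
      (Rt * RtDᵀ).mulVec v ⬝ᵥ St.mulVec ((Rt * RtDᵀ).mulVec v) ≤
        C ^ 2 * (v ⬝ᵥ St.mulVec v))
    (u : Fin n → ℝ) :
    u ⬝ᵥ ((Rtᵀ * St * Rt) * (RtDᵀ * St⁻¹ * RtD) * (Rtᵀ * St * Rt)).mulVec u ≤
      C ^ 2 * (u ⬝ᵥ (Rtᵀ * St * Rt).mulVec u) := by
  have hStT : Stᵀ = St := hSt.1
  have hdet : IsUnit St.det := hSt.det_pos.ne'.isUnit
  have hinv : St * St⁻¹ = 1 := mul_nonsing_inv St hdet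
  have hShT : (Rtᵀ * St * Rt)ᵀ = Rtᵀ * St * Rt := by
    simp [transpose_mul, hStT, Matrix.mul_assoc]
  have hStPSD : ∀ x : Fin m → ℝ, 0 ≤ x ⬝ᵥ St.mulVec x := fun x => by
    simpa using hSt.posSemidef.dotProduct_mulVec_nonneg x
  have hpos : ∀ x : Fin n → ℝ, 0 ≤ x ⬝ᵥ (Rtᵀ * St * Rt).mulVec x := fun x => by
    rw [dot_conj]; exact hStPSD _
  obtain ⟨z, hz⟩ : ∃ z, St⁻¹.mulVec (RtD.mulVec ((Rtᵀ * St * Rt).mulVec u)) = z :=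
    ⟨_, rfl⟩
  obtain ⟨w, hw⟩ : ∃ w, RtDᵀ.mulVec z = w := ⟨_, rfl⟩
  have hStz : St.mulVec z = RtD.mulVec ((Rtᵀ * St * Rt).mulVec u) := by
    rw [← hz, mulVec_mulVec, hinv, one_mulVec]
  have hLHS : ((Rtᵀ * St * Rt) * (RtDᵀ * St⁻¹ * RtD) * (Rtᵀ * St * Rt)).mulVec u
      = (Rtᵀ * St * Rt).mulVec w := by
    rw [← hw, ← hz]
    simp only [mulVec_mulVec, Matrix.mul_assoc]
  have haz : u ⬝ᵥ (Rtᵀ * St * Rt).mulVec w = z ⬝ᵥ St.mulVec z := by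
    rw [dotProduct_mulVec, ← mulVec_transpose, hShT, ← hw, dotProduct_mulVec,
      vecMul_transpose, ← hStz, dotProduct_comm]
  have h1 : (Rt * RtDᵀ).mulVec z = Rt.mulVec w := by
    rw [← hw, mulVec_mulVec]
  have hwle : w ⬝ᵥ (Rtᵀ * St * Rt).mulVec w ≤
      C ^ 2 * (u ⬝ᵥ (Rtᵀ * St * Rt).mulVec w) := by
    have h := hED z
    rw [h1] at h
    rw [dot_conj, haz]
    exact h
  have ha0 : 0 ≤ u ⬝ᵥ (Rtᵀ * St * Rt).mulVec w := by
    rw [haz]; exact hStPSD z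
  have hb0 : 0 ≤ u ⬝ᵥ (Rtᵀ * St * Rt).mulVec u := hpos u
  have hcs := cs_psd n (Rtᵀ * St * Rt) hShT hpos u w
  rw [hLHS]
  rcases ha0.eq_or_lt with h0 | h0
  · rw [← h0]
    positivity
  · nlinarith [hcs, hwle, hb0, h0]
end

section
/- Let S̃ be an m×m real symmetric positive definite matrix, let R̃ and R̃_D be m×n real matrices with R̃_Dᵀ R̃ = Iₙ, define Ŝ = R̃ᵀ S̃ R̃, M⁻¹ = R̃_Dᵀ S̃⁻¹ R̃_D, and E_D = R̃ R̃_Dᵀ, and assume there is a constant C ≥ 1 such that (E_D v)ᵀ S̃ (E_D v) ≤ C² · vᵀ S̃ v for all v ∈ ℝᵐ. Then Ŝ is symmetric positive definite (R̃ being injective since R̃_Dᵀ R̃ = I), and for every u ∈ ℝⁿ with u ≠ 0, the generalized Rayleigh quotient satisfies 1 ≤ (uᵀ Ŝ M⁻¹ Ŝ u) / (uᵀ Ŝ u) ≤ C². In particular, every eigenvalue λ of the preconditioned BDDC operator M⁻¹ Ŝ (i.e., every λ ∈ ℝ for which there is w ≠ 0 with M⁻¹ Ŝ w = λ w) satisfies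 1 ≤ λ ≤ C². -/
open Matrix

private lemma dot_cs {m : ℕ} (x y : Fin m → ℝ) :
    (x ⬝ᵥ y) ^ 2 ≤ (x ⬝ᵥ x) * (y ⬝ᵥ y) := by
  have h := Finset.sum_mul_sq_le_sq_mul_sq Finset.univ x y
  simp only [dotProduct]
  simpa [sq] using h

private lemma dot_transpose_mulVec {k l : ℕ} (B : Matrix (Fin k) (Fin l) ℝ)
    (a : Fin l → ℝ) (c : Fin k → ℝ) : a ⬝ᵥ Bᵀ *ᵥ c = (B *ᵥ a) ⬝ᵥ c := by
  rw [dotProduct_mulVec, vecMul_transpose]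

open scoped MatrixOrder in
private lemma cs_S {m : ℕ} {S : Matrix (Fin m) (Fin m) ℝ} (hS : S.PosDef)
    (a b : Fin m → ℝ) :
    (a ⬝ᵥ S *ᵥ b) ^ 2 ≤ (a ⬝ᵥ S *ᵥ a) * (b ⬝ᵥ S *ᵥ b) := by
  obtain ⟨T, hTsym, hTT⟩ : ∃ T : Matrix (Fin m) (Fin m) ℝ, Tᵀ = T ∧ T * T = S :=
    ⟨CFC.sqrt S, by
        have h := (CFC.sqrt_nonneg S).posSemidef.1
        rwa [IsHermitian, conjTranspose_eq_transpose_of_trivial] at h,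
      CFC.sqrt_mul_sqrt_self S hS.posSemidef.nonneg⟩
  have key : ∀ c d : Fin m → ℝ, c ⬝ᵥ S *ᵥ d = (T *ᵥ c) ⬝ᵥ (T *ᵥ d) := by
    intro c d
    rw [← hTT, ← mulVec_mulVec, dotProduct_mulVec, ← hTsym, vecMul_transpose, hTsym]
  rw [key a b, key a a, key b b]
  exact dot_cs _ _

private lemma pairing_cs {m : ℕ} {S : Matrix (Fin m) (Fin m) ℝ} (hS : S.PosDef)
    (a b : Fin m → ℝ) :
    (a ⬝ᵥ b) ^ 2 ≤ (a ⬝ᵥ S⁻¹ *ᵥ a) * (b ⬝ᵥ S *ᵥ b) := by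
  have hdet : IsUnit S.det := isUnit_iff_ne_zero.mpr hS.det_pos.ne'
  have h1 : a ⬝ᵥ b = a ⬝ᵥ S⁻¹ *ᵥ (S *ᵥ b) := by
    rw [mulVec_mulVec, nonsing_inv_mul S hdet, one_mulVec]
  have h2 := cs_S hS.inv a (S *ᵥ b)
  have h3 : (S *ᵥ b) ⬝ᵥ S⁻¹ *ᵥ (S *ᵥ b) = b ⬝ᵥ S *ᵥ b := by
    rw [mulVec_mulVec, nonsing_inv_mul S hdet, one_mulVec, dotProduct_comm]
  rw [h1]
  rw [h3] at h2
  exact h2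

/-- Main BDDC condition number theorem (finite-dimensional content): with `S̃` symmetric
positive definite, `R̃_Dᵀ R̃ = I`, `Ŝ = R̃ᵀ S̃ R̃`, `M⁻¹ = R̃_Dᵀ S̃⁻¹ R̃_D`, `E_D = R̃ R̃_Dᵀ`,
and the averaging stability bound `|E_D v|_S̃² ≤ C² |v|_S̃²` with `C ≥ 1`, the assembled
operator `Ŝ` is symmetric positive definite, the generalized Rayleigh quotient
`(uᵀ Ŝ M⁻¹ Ŝ u)/(uᵀ Ŝ u)` lies in `[1, C²]` for every `u ≠ 0`, and every eigenvalue `λ`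
of `M⁻¹ Ŝ` satisfies `1 ≤ λ ≤ C²`. -/
theorem bddc_condition_number
    (n m : ℕ)
    (St : Matrix (Fin m) (Fin m) ℝ) (hSt : St.PosDef)
    (Rt RtD : Matrix (Fin m) (Fin n) ℝ)
    (hR : RtDᵀ * Rt = (1 : Matrix (Fin n) (Fin n) ℝ))
    (C : ℝ) (hC : 1 ≤ C)
    (hED : ∀ v : Fin m → ℝ,
      (Rt * RtDᵀ).mulVec v ⬝ᵥ St.mulVec ((Rt * RtDᵀ).mulVec v) ≤
        C ^ 2 * (v ⬝ᵥ St.mulVec v)) :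
    (Rtᵀ * St * Rt).PosDef ∧
    (∀ u : Fin n → ℝ, u ≠ 0 →
      1 ≤ (u ⬝ᵥ ((Rtᵀ * St * Rt) * (RtDᵀ * St⁻¹ * RtD) * (Rtᵀ * St * Rt)).mulVec u) /
            (u ⬝ᵥ (Rtᵀ * St * Rt).mulVec u) ∧
      (u ⬝ᵥ ((Rtᵀ * St * Rt) * (RtDᵀ * St⁻¹ * RtD) * (Rtᵀ * St * Rt)).mulVec u) /
            (u ⬝ᵥ (Rtᵀ * St * Rt).mulVec u) ≤ C ^ 2) ∧
    (∀ (lam : ℝ) (w : Fin n → ℝ), w ≠ 0 →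
      ((RtDᵀ * St⁻¹ * RtD) * (Rtᵀ * St * Rt)).mulVec w = lam • w →
      1 ≤ lam ∧ lam ≤ C ^ 2) := by
  have hdet : IsUnit St.det := isUnit_iff_ne_zero.mpr hSt.det_pos.ne'
  have hStsym : Stᵀ = St := by
    have h := hSt.1
    rwa [IsHermitian, conjTranspose_eq_transpose_of_trivial] at h
  have hStpos : ∀ v : Fin m → ℝ, v ≠ 0 → 0 < v ⬝ᵥ St *ᵥ v := by
    intro v hv
    simpa using hSt.dotProduct_mulVec_pos hv
  -- injectivity of Rt
  have hRinj : ∀ u : Fin n → ℝ, Rt *ᵥ u = 0 → u = 0 := by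
    intro u h
    have : u = RtDᵀ *ᵥ (Rt *ᵥ u) := by
      rw [mulVec_mulVec, hR, one_mulVec]
    rw [this, h, mulVec_zero]
  -- quadratic form identity
  have quad : ∀ u : Fin n → ℝ,
      u ⬝ᵥ (Rtᵀ * St * Rt) *ᵥ u = (Rt *ᵥ u) ⬝ᵥ St *ᵥ (Rt *ᵥ u) := by
    intro u
    rw [Matrix.mul_assoc, ← mulVec_mulVec (M := Rtᵀ), dot_transpose_mulVec,
      ← mulVec_mulVec]
  -- Ŝ is positive definite
  have hSh : (Rtᵀ * St * Rt).PosDef := by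
    rw [posDef_iff_dotProduct_mulVec]
    constructor
    · show (Rtᵀ * St * Rt)ᴴ = _
      rw [conjTranspose_eq_transpose_of_trivial, transpose_mul, transpose_mul,
        transpose_transpose, hStsym, Matrix.mul_assoc]
    · intro x hx
      have hx' : Rt *ᵥ x ≠ 0 := fun h => hx (hRinj x h)
      simpa [quad x] using hStpos _ hx'
  -- Rayleigh quotient bounds, in product form
  have main : ∀ u : Fin n → ℝ, u ≠ 0 →
      (u ⬝ᵥ (Rtᵀ * St * Rt) *ᵥ u ≤
        u ⬝ᵥ ((Rtᵀ * St * Rt) * (RtDᵀ * St⁻¹ * RtD) * (Rtᵀ * St * Rt)) *ᵥ u) ∧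
      (u ⬝ᵥ ((Rtᵀ * St * Rt) * (RtDᵀ * St⁻¹ * RtD) * (Rtᵀ * St * Rt)) *ᵥ u ≤
        C ^ 2 * (u ⬝ᵥ (Rtᵀ * St * Rt) *ᵥ u)) := by
    intro u hu
    set x : Fin m → ℝ := Rt *ᵥ u with hxdef
    set q : Fin n → ℝ := (Rtᵀ * St * Rt) *ᵥ u with hqdef
    set p : Fin m → ℝ := RtD *ᵥ q with hpdef
    set w : Fin m → ℝ := St⁻¹ *ᵥ p with hwdef
    have hx' : x ≠ 0 := fun h => hu (hRinj u h)
    have hα : u ⬝ᵥ (Rtᵀ * St * Rt) *ᵥ u = x ⬝ᵥ St *ᵥ x := quad u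
    have hαpos : 0 < x ⬝ᵥ St *ᵥ x := hStpos x hx'
    -- numerator equals p ⬝ᵥ St⁻¹ *ᵥ p
    have hnum : u ⬝ᵥ ((Rtᵀ * St * Rt) * (RtDᵀ * St⁻¹ * RtD) * (Rtᵀ * St * Rt)) *ᵥ u
        = p ⬝ᵥ St⁻¹ *ᵥ p := by
      have h1 : ((Rtᵀ * St * Rt) * (RtDᵀ * St⁻¹ * RtD) * (Rtᵀ * St * Rt)) *ᵥ u
          = (Rtᵀ * St * Rt) *ᵥ ((RtDᵀ * St⁻¹ * RtD) *ᵥ q) := by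
        rw [mulVec_mulVec, mulVec_mulVec, Matrix.mul_assoc]
      rw [h1]
      have h2 : u ⬝ᵥ (Rtᵀ * St * Rt) *ᵥ ((RtDᵀ * St⁻¹ * RtD) *ᵥ q)
          = q ⬝ᵥ (RtDᵀ * St⁻¹ * RtD) *ᵥ q := by
        have hsym : (Rtᵀ * St * Rt)ᵀ = Rtᵀ * St * Rt := by
          rw [transpose_mul, transpose_mul, transpose_transpose, hStsym,
            Matrix.mul_assoc]
        conv_lhs => rw [← hsym]
        rw [dot_transpose_mulVec]
      rw [h2, Matrix.mul_assoc, ← mulVec_mulVec (M := RtDᵀ), dot_transpose_mulVec,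
        ← mulVec_mulVec]
    -- α = p ⬝ᵥ x
    have hαp : x ⬝ᵥ St *ᵥ x = p ⬝ᵥ x := by
      have hu' : u = RtDᵀ *ᵥ x := by
        rw [hxdef, mulVec_mulVec, hR, one_mulVec]
      calc x ⬝ᵥ St *ᵥ x = u ⬝ᵥ q := (quad u).symm
        _ = q ⬝ᵥ (RtDᵀ *ᵥ x) := by rw [dotProduct_comm, ← hu']
        _ = (RtD *ᵥ q) ⬝ᵥ x := dot_transpose_mulVec _ _ _
        _ = p ⬝ᵥ x := rfl
    -- lower bound: α ≤ β
    have hlow : x ⬝ᵥ St *ᵥ x ≤ p ⬝ᵥ St⁻¹ *ᵥ p := by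
      have hcs := pairing_cs hSt p x
      rw [← hαp] at hcs
      nlinarith [hαpos]
    -- upper bound
    have hβα : p ⬝ᵥ St⁻¹ *ᵥ p = w ⬝ᵥ St *ᵥ w := by
      have : St *ᵥ w = p := by
        rw [hwdef, mulVec_mulVec, mul_nonsing_inv St hdet, one_mulVec]
      rw [this, dotProduct_comm, hwdef]
    have hβE : p ⬝ᵥ St⁻¹ *ᵥ p = ((Rt * RtDᵀ) *ᵥ w) ⬝ᵥ St *ᵥ x := by
      have hq : q = Rtᵀ *ᵥ (St *ᵥ x) := by
        rw [hqdef, hxdef, mulVec_mulVec, mulVec_mulVec]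
      calc p ⬝ᵥ St⁻¹ *ᵥ p = w ⬝ᵥ St *ᵥ w := hβα
        _ = w ⬝ᵥ p := by
            rw [show St *ᵥ w = p by
              rw [hwdef, mulVec_mulVec, mul_nonsing_inv St hdet, one_mulVec]]
        _ = (RtDᵀ *ᵥ w) ⬝ᵥ q := by
            rw [hpdef, dotProduct_comm w, ← dot_transpose_mulVec, dotProduct_comm]
        _ = ((Rt * RtDᵀ) *ᵥ w) ⬝ᵥ St *ᵥ x := by
            rw [hq, dot_transpose_mulVec, mulVec_mulVec]
    have hup : p ⬝ᵥ St⁻¹ *ᵥ p ≤ C ^ 2 * (x ⬝ᵥ St *ᵥ x) := by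
      by_cases hβ0 : p ⬝ᵥ St⁻¹ *ᵥ p = 0
      · rw [hβ0]; positivity
      have hβpos : 0 < p ⬝ᵥ St⁻¹ *ᵥ p := lt_of_lt_of_le hαpos hlow
      have hcs := cs_S hSt ((Rt * RtDᵀ) *ᵥ w) x
      have hEbd := hED w
      rw [← hβα] at hEbd
      have hsq : (p ⬝ᵥ St⁻¹ *ᵥ p) ^ 2 ≤ (C ^ 2 * (p ⬝ᵥ St⁻¹ *ᵥ p)) * (x ⬝ᵥ St *ᵥ x) := by
        calc (p ⬝ᵥ St⁻¹ *ᵥ p) ^ 2 = (((Rt * RtDᵀ) *ᵥ w) ⬝ᵥ St *ᵥ x) ^ 2 := by rw [hβE]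
          _ ≤ (((Rt * RtDᵀ) *ᵥ w) ⬝ᵥ St *ᵥ ((Rt * RtDᵀ) *ᵥ w)) * (x ⬝ᵥ St *ᵥ x) := hcs
          _ ≤ (C ^ 2 * (p ⬝ᵥ St⁻¹ *ᵥ p)) * (x ⬝ᵥ St *ᵥ x) := by
              apply mul_le_mul_of_nonneg_right hEbd hαpos.le
      nlinarith [hβpos]
    rw [hα, hnum]
    exact ⟨hlow, hup⟩
  refine ⟨hSh, fun u hu => ?_, fun lam w hw hEig => ?_⟩
  · have hαpos : 0 < u ⬝ᵥ (Rtᵀ * St * Rt) *ᵥ u := by simpa using hSh.dotProduct_mulVec_pos hu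
    obtain ⟨h1, h2⟩ := main u hu
    constructor
    · rw [le_div_iff₀ hαpos]; simpa using h1
    · rw [div_le_iff₀ hαpos]; exact h2
  · have hαpos : 0 < w ⬝ᵥ (Rtᵀ * St * Rt) *ᵥ w := by simpa using hSh.dotProduct_mulVec_pos hw
    obtain ⟨h1, h2⟩ := main w hw
    have hnum : w ⬝ᵥ ((Rtᵀ * St * Rt) * (RtDᵀ * St⁻¹ * RtD) * (Rtᵀ * St * Rt)) *ᵥ w
        = lam * (w ⬝ᵥ (Rtᵀ * St * Rt) *ᵥ w) := by
      have h3 : ((Rtᵀ * St * Rt) * (RtDᵀ * St⁻¹ * RtD) * (Rtᵀ * St * Rt)) *ᵥ w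
          = (Rtᵀ * St * Rt) *ᵥ (((RtDᵀ * St⁻¹ * RtD) * (Rtᵀ * St * Rt)) *ᵥ w) := by
        rw [mulVec_mulVec, Matrix.mul_assoc]
      rw [h3, hEig, mulVec_smul, dotProduct_smul, smul_eq_mul]
    rw [hnum] at h1 h2
    exact ⟨by nlinarith [hαpos], by nlinarith [hαpos]⟩
end
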